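/- Let ψ1 on ℂ^{d1}⊗ℂ^{d1} and ψ2 on ℂ^{d2}⊗ℂ^{d2} be pure states in Schmidt form, p ∈ [0,1], and set N_i = 1/(d_i²−1). Then the multiset of eigenvalues (with multiplicity) of the partial transpose ρ_p(ψ1,ψ2)^{Γ_A} is exactly { (1−p)·N1·N2·(1−λ1)(1−λ2) + p·λ1·λ2 }, where λ1 ranges over the d1² eigenvalues (with multiplicity) of (P_{ψ1})^Γ and λ2 ranges over the d2² eigenvalues (with multiplicity) of (P_{ψ2})^Γ. -/
import Mathlib


open Matrix BigOperators
open scoped ComplexOrder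

/-- Partial transpose with respect to the first tensor factor (side A):
`X^Γ[(a,b),(a',b')] = X[(a',b),(a,b')]`. -/
def ptg {A B : Type*} (X : Matrix (A × B) (A × B) ℂ) : Matrix (A × B) (A × B) ℂ :=
  Matrix.of fun p q => X (q.1, p.2) (p.1, q.2)

/-- A pure state in Schmidt form with Schmidt coefficients `μ`:
`ψ[(i,j)] = μ_i δ_{ij}`. -/
noncomputable def schmidtVec {d : ℕ} (μ : Fin d → ℝ) : Fin d × Fin d → ℂ :=
  fun p => if p.1 = p.2 then (μ p.1 : ℂ) else 0

/-- Rank-one projection onto the vector `v`. -/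
noncomputable def projVec {n : Type*} (v : n → ℂ) : Matrix n n ℂ :=
  Matrix.of fun p q => v p * star (v q)

/-- Cut-respecting tensor product `σ ⊠ τ`. -/
def ctens {d1 d2 : ℕ} (σ : Matrix (Fin d1 × Fin d1) (Fin d1 × Fin d1) ℂ)
    (τ : Matrix (Fin d2 × Fin d2) (Fin d2 × Fin d2) ℂ) :
    Matrix ((Fin d1 × Fin d2) × (Fin d1 × Fin d2)) ((Fin d1 × Fin d2) × (Fin d1 × Fin d2)) ℂ :=
  Matrix.of fun p q => σ (p.1.1, p.2.1) (q.1.1, q.2.1) * τ (p.1.2, p.2.2) (q.1.2, q.2.2)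

/-- The state `ρ_p(ψ1,ψ2)`. -/
noncomputable def rhoP {d1 d2 : ℕ} (μ1 : Fin d1 → ℝ) (μ2 : Fin d2 → ℝ) (p : ℝ) :
    Matrix ((Fin d1 × Fin d2) × (Fin d1 × Fin d2)) ((Fin d1 × Fin d2) × (Fin d1 × Fin d2)) ℂ :=
  ((1 - p) / (((d1 : ℝ) ^ 2 - 1) * ((d2 : ℝ) ^ 2 - 1))) •
      ctens (1 - projVec (schmidtVec μ1)) (1 - projVec (schmidtVec μ2))
    + p • ctens (projVec (schmidtVec μ1)) (projVec (schmidtVec μ2))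

open Polynomial

/-! ### Auxiliary lemmas -/

def shuffle {α β γ δ : Type*} : (α × β) × (γ × δ) ≃ (α × γ) × (β × δ) :=
  ⟨fun x => ((x.1.1, x.2.1), (x.1.2, x.2.2)), fun y => ((y.1.1, y.2.1), (y.1.2, y.2.2)),
    fun _ => rfl, fun _ => rfl⟩

lemma charpoly_conj_of {n : Type*} [DecidableEq n] [Fintype n]
    (U V M : Matrix n n ℂ) (h1 : U * V = 1) :
    (U * M * V).charpoly = M.charpoly := by
  have hmap : (U.map C) * (V.map C) = 1 := by
    rw [← Matrix.map_mul, h1, Matrix.map_one _ (map_zero C) (map_one C)]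
  have hcm : charmatrix (U * M * V) = U.map C * charmatrix M * V.map C := by
    unfold charmatrix
    simp only [RingHom.mapMatrix_apply, Matrix.map_mul, Matrix.mul_sub, Matrix.sub_mul]
    congr 1
    rw [mul_assoc, (Matrix.scalar_commute (X : ℂ[X]) (fun r => Commute.all _ _) _).eq,
      ← mul_assoc, hmap, one_mul]
  rw [Matrix.charpoly, Matrix.charpoly, hcm, det_mul, det_mul]
  have hd : (U.map C).det * (V.map C).det = 1 := by rw [← det_mul, hmap, det_one]
  calc (U.map C).det * (charmatrix M).det * (V.map C).det
      = (U.map C).det * (V.map C).det * (charmatrix M).det := by ring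
    _ = (charmatrix M).det := by rw [hd, one_mul]

lemma roots_charpoly_diagonal {n : Type*} [DecidableEq n] [Fintype n] (f : n → ℂ) :
    (Matrix.diagonal f).charpoly.roots = Finset.univ.val.map f := by
  have h : (Matrix.diagonal f).charpoly = ∏ i, (X - C (f i)) := by
    rw [Matrix.charpoly]
    have : charmatrix (Matrix.diagonal f) = Matrix.diagonal fun i => (X : ℂ[X]) - C (f i) := by
      ext i j
      by_cases h : i = j <;> simp [h, Matrix.diagonal_apply_ne, charmatrix]
    rw [this, det_diagonal]
  rw [h, Finset.prod_eq_multiset_prod]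
  rw [show (Multiset.map (fun i => X - C (f i)) Finset.univ.val)
      = (Finset.univ.val.map f).map fun a => X - C a by rw [Multiset.map_map]; rfl]
  exact Polynomial.roots_multiset_prod_X_sub_C _

lemma map_sprod {α β γ δ : Type*} (f : α → γ) (g : β → δ) (s : Multiset α) (t : Multiset β) :
    (s.map f) ×ˢ (t.map g) = (s ×ˢ t).map (Prod.map f g) := by
  simp only [SProd.sprod, Multiset.product, Multiset.bind_map, Multiset.map_bind,
    Multiset.map_map, Function.comp_def, Prod.map]

section ctenslemmas
variable {d1 d2 : ℕ}

lemma ctens_mul (σ σ' : Matrix (Fin d1 × Fin d1) (Fin d1 × Fin d1) ℂ)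
    (τ τ' : Matrix (Fin d2 × Fin d2) (Fin d2 × Fin d2) ℂ) :
    ctens σ τ * ctens σ' τ' = ctens (σ * σ') (τ * τ') := by
  ext p q
  simp only [Matrix.mul_apply, ctens, Matrix.of_apply]
  rw [Finset.sum_mul_sum]
  have h1 : ∑ x : (Fin d1 × Fin d2) × Fin d1 × Fin d2,
      σ (p.1.1, p.2.1) (x.1.1, x.2.1) * τ (p.1.2, p.2.2) (x.1.2, x.2.2) *
        (σ' (x.1.1, x.2.1) (q.1.1, q.2.1) * τ' (x.1.2, x.2.2) (q.1.2, q.2.2))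
      = ∑ x : (Fin d1 × Fin d1) × Fin d2 × Fin d2,
        σ (p.1.1, p.2.1) x.1 * σ' x.1 (q.1.1, q.2.1) *
          (τ (p.1.2, p.2.2) x.2 * τ' x.2 (q.1.2, q.2.2)) := by
    refine (Fintype.sum_equiv shuffle _ _ fun x => ?_).symm
    obtain ⟨⟨a, b⟩, ⟨c, d⟩⟩ := x
    simp only [shuffle, Equiv.coe_fn_mk]
    ring
  rw [h1, Fintype.sum_prod_type]

lemma ctens_one :
    ctens (1 : Matrix (Fin d1 × Fin d1) _ ℂ) (1 : Matrix (Fin d2 × Fin d2) _ ℂ) = 1 := by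
  ext ⟨⟨a, c⟩, ⟨b, e⟩⟩ ⟨⟨a', c'⟩, ⟨b', e'⟩⟩
  simp only [ctens, Matrix.of_apply, Matrix.one_apply, Prod.mk.injEq, Prod.ext_iff]
  by_cases h1 : a = a' <;> by_cases h2 : b = b' <;> by_cases h3 : c = c' <;> by_cases h4 : e = e' <;>
    simp [h1, h2, h3, h4]

lemma ctens_conjTranspose (σ : Matrix (Fin d1 × Fin d1) (Fin d1 × Fin d1) ℂ)
    (τ : Matrix (Fin d2 × Fin d2) (Fin d2 × Fin d2) ℂ) :
    (ctens σ τ)ᴴ = ctens σᴴ τᴴ := by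
  ext p q
  simp [ctens, Matrix.conjTranspose_apply, star_mul']

lemma ctens_diagonal (f : Fin d1 × Fin d1 → ℂ) (g : Fin d2 × Fin d2 → ℂ) :
    ctens (Matrix.diagonal f) (Matrix.diagonal g) =
      Matrix.diagonal (fun y => f (y.1.1, y.2.1) * g (y.1.2, y.2.2)) := by
  ext ⟨⟨a, c⟩, ⟨b, e⟩⟩ ⟨⟨a', c'⟩, ⟨b', e'⟩⟩
  simp only [ctens, Matrix.of_apply, Matrix.diagonal_apply, Prod.mk.injEq, Prod.ext_iff]
  by_cases h1 : a = a' <;> by_cases h2 : b = b' <;> by_cases h3 : c = c' <;> by_cases h4 : e = e' <;>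
    simp [h1, h2, h3, h4]

lemma ptg_ctens (σ : Matrix (Fin d1 × Fin d1) (Fin d1 × Fin d1) ℂ)
    (τ : Matrix (Fin d2 × Fin d2) (Fin d2 × Fin d2) ℂ) :
    ptg (ctens σ τ) = ctens (ptg σ) (ptg τ) := rfl

lemma ptg_one {A B : Type*} [DecidableEq A] [DecidableEq B] :
    ptg (1 : Matrix (A × B) (A × B) ℂ) = 1 := by
  ext ⟨a, b⟩ ⟨c, d⟩
  simp only [ptg, Matrix.of_apply, Matrix.one_apply, Prod.mk.injEq]
  by_cases h1 : a = c <;> by_cases h2 : b = d <;> simp [h1, h2, eq_comm]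

lemma ptg_add {A B : Type*} (X Y : Matrix (A × B) (A × B) ℂ) :
    ptg (X + Y) = ptg X + ptg Y := rfl

lemma ptg_sub {A B : Type*} (X Y : Matrix (A × B) (A × B) ℂ) :
    ptg (X - Y) = ptg X - ptg Y := rfl

lemma ptg_smul {A B : Type*} (r : ℝ) (X : Matrix (A × B) (A × B) ℂ) :
    ptg (r • X) = r • ptg X := rfl

lemma ptg_hermitian {d : ℕ} (μ : Fin d → ℝ) :
    (ptg (projVec (schmidtVec μ))).IsHermitian := by
  ext ⟨i, j⟩ ⟨k, l⟩
  simp only [Matrix.conjTranspose_apply, ptg, projVec, Matrix.of_apply, star_mul', star_star]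
  ring

end ctenslemmas

theorem eigenvalues_of_partial_transpose_rhoP {d1 d2 : ℕ}
    (μ1 : Fin d1 → ℝ) (μ2 : Fin d2 → ℝ)
    (h1pos : ∀ i, 0 ≤ μ1 i) (h1norm : ∑ i, μ1 i ^ 2 = 1)
    (h2pos : ∀ i, 0 ≤ μ2 i) (h2norm : ∑ i, μ2 i ^ 2 = 1)
    (p : ℝ) (hp0 : 0 ≤ p) (hp1 : p ≤ 1) :
    (ptg (rhoP μ1 μ2 p)).charpoly.roots =
      Multiset.map
        (fun z : ℂ × ℂ =>
          (((1 - p) * (1 / ((d1 : ℝ) ^ 2 - 1)) * (1 / ((d2 : ℝ) ^ 2 - 1)) : ℝ) : ℂ)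
              * (1 - z.1) * (1 - z.2)
            + (p : ℂ) * z.1 * z.2)
        (Multiset.product
          (ptg (projVec (schmidtVec μ1))).charpoly.roots
          (ptg (projVec (schmidtVec μ2))).charpoly.roots) := by
  classical
  set c : ℝ := (1 - p) / (((d1 : ℝ) ^ 2 - 1) * ((d2 : ℝ) ^ 2 - 1)) with hc
  set M1 := ptg (projVec (schmidtVec μ1)) with hM1def
  set M2 := ptg (projVec (schmidtVec μ2)) with hM2def
  have hM1 : M1.IsHermitian := ptg_hermitian μ1
  have hM2 : M2.IsHermitian := ptg_hermitian μ2
  set U1 : Matrix (Fin d1 × Fin d1) (Fin d1 × Fin d1) ℂ := (hM1.eigenvectorUnitary : Matrix (Fin d1 × Fin d1) (Fin d1 × Fin d1) ℂ) with hU1def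
  set U2 : Matrix (Fin d2 × Fin d2) (Fin d2 × Fin d2) ℂ := (hM2.eigenvectorUnitary : Matrix (Fin d2 × Fin d2) (Fin d2 × Fin d2) ℂ) with hU2def
  set g1 : Fin d1 × Fin d1 → ℂ := fun x => (hM1.eigenvalues x : ℂ) with hg1
  set g2 : Fin d2 × Fin d2 → ℂ := fun x => (hM2.eigenvalues x : ℂ) with hg2
  have hU1u : U1 * star U1 = 1 :=
    Matrix.mem_unitaryGroup_iff.mp hM1.eigenvectorUnitary.2
  have hU2u : U2 * star U2 = 1 :=
    Matrix.mem_unitaryGroup_iff.mp hM2.eigenvectorUnitary.2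
  have hspec1 : M1 = U1 * Matrix.diagonal g1 * star U1 := hM1.spectral_theorem
  have hspec2 : M2 = U2 * Matrix.diagonal g2 * star U2 := hM2.spectral_theorem
  -- the big matrix as a conjugated diagonal
  have hone1 : (1 : Matrix (Fin d1 × Fin d1) _ ℂ) - M1
      = U1 * (1 - Matrix.diagonal g1) * star U1 := by
    rw [Matrix.mul_sub, Matrix.sub_mul, mul_one, hU1u, ← hspec1]
  have hone2 : (1 : Matrix (Fin d2 × Fin d2) _ ℂ) - M2
      = U2 * (1 - Matrix.diagonal g2) * star U2 := by
    rw [Matrix.mul_sub, Matrix.sub_mul, mul_one, hU2u, ← hspec2]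
  set V := ctens U1 U2 with hV
  have hVu : V * Vᴴ = 1 := by
    rw [hV, ctens_conjTranspose, ctens_mul, ← Matrix.star_eq_conjTranspose U1,
      ← Matrix.star_eq_conjTranspose U2, hU1u, hU2u, ctens_one]
  set F : (Fin d1 × Fin d2) × (Fin d1 × Fin d2) → ℂ := fun y =>
    c • ((1 - g1 (y.1.1, y.2.1)) * (1 - g2 (y.1.2, y.2.2)))
      + p • (g1 (y.1.1, y.2.1) * g2 (y.1.2, y.2.2)) with hF
  have hbig : ptg (rhoP μ1 μ2 p) = V * Matrix.diagonal F * Vᴴ := by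
    rw [rhoP, ptg_add, ptg_smul, ptg_smul, ptg_ctens, ptg_ctens, ptg_sub, ptg_sub, ptg_one,
      ptg_one, ← hM1def, ← hM2def, ← hc, hone1, hone2]
    conv_lhs => rw [hspec1, hspec2]
    have key : ∀ (A : Matrix (Fin d1 × Fin d1) (Fin d1 × Fin d1) ℂ)
        (B : Matrix (Fin d2 × Fin d2) (Fin d2 × Fin d2) ℂ),
        ctens (U1 * A * star U1) (U2 * B * star U2) = V * ctens A B * Vᴴ := by
      intro A B
      rw [hV, ctens_conjTranspose, ← ctens_mul, ← ctens_mul,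
        Matrix.star_eq_conjTranspose U1, Matrix.star_eq_conjTranspose U2]
    rw [key, key]
    have hdiag : c • ctens (1 - Matrix.diagonal g1) (1 - Matrix.diagonal g2)
        + p • ctens (Matrix.diagonal g1) (Matrix.diagonal g2) = Matrix.diagonal F := by
      rw [show (1 : Matrix (Fin d1 × Fin d1) _ ℂ) = Matrix.diagonal 1 from (Matrix.diagonal_one).symm,
        show (1 : Matrix (Fin d2 × Fin d2) _ ℂ) = Matrix.diagonal 1 from (Matrix.diagonal_one).symm,
        Matrix.diagonal_sub, Matrix.diagonal_sub, ctens_diagonal, ctens_diagonal,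
        ← Matrix.diagonal_smul, ← Matrix.diagonal_smul, Matrix.diagonal_add]
      congr 1
    rw [← hdiag, Matrix.mul_add, Matrix.add_mul, Matrix.mul_smul, Matrix.smul_mul,
      Matrix.mul_smul, Matrix.smul_mul]
  -- compute both sides
  rw [hbig, charpoly_conj_of _ _ _ hVu, roots_charpoly_diagonal]
  rw [hspec1, hspec2, charpoly_conj_of _ _ _ hU1u, charpoly_conj_of _ _ _ hU2u,
    roots_charpoly_diagonal, roots_charpoly_diagonal]
  show _ = Multiset.map _ ((Finset.univ.val.map g1) ×ˢ (Finset.univ.val.map g2))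
  rw [map_sprod, Multiset.map_map, ← Finset.product_val, Finset.univ_product_univ]
  rw [show (Finset.univ.val : Multiset ((Fin d1 × Fin d2) × (Fin d1 × Fin d2)))
      = Finset.univ.val.map (shuffle (α := Fin d1) (β := Fin d1) (γ := Fin d2) (δ := Fin d2)) by
    rw [← Finset.map_univ_equiv (shuffle : _ ≃ ((Fin d1 × Fin d2) × (Fin d1 × Fin d2)))]; rfl]
  rw [Multiset.map_map]
  apply Multiset.map_congr rfl
  intro x _
  obtain ⟨⟨a, b⟩, ⟨u, v⟩⟩ := x
  simp only [Function.comp_apply, shuffle, Equiv.coe_fn_mk, hF, Prod.map]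
  rw [Complex.real_smul, Complex.real_smul, hc]
  push_cast
  rw [div_eq_mul_inv, mul_inv, one_div, one_div]
  ring
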